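/- Let v be a valuation on a commutative pointed monoid A with value group Γ_v, and let H ⊊ Γ_v be a convex subgroup strictly containing cΓ_v. Then 𝔍 := {x ∈ A : v(x) is cofinal for H} is a radical ideal of A (i.e., an ideal with √𝔍 = 𝔍). -/

import Mathlib

/-- A convex subgroup of a totally ordered abelian group. -/
def IsConvexSubgroup {Γ : Type*} [CommGroup Γ] [LinearOrder Γ] [IsOrderedMonoid Γ] (H : Subgroup Γ) : Prop :=
  ∀ γ δ : Γ, γ ≤ δ → δ ≤ 1 → γ ∈ H → δ ∈ H

/-- `γ` is cofinal for the subgroup `H`: for every `h ∈ H` some power `γ^n < h`. -/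
def IsCofinalForSubgroup {Γ : Type*} [CommGroup Γ] [LinearOrder Γ] [IsOrderedMonoid Γ] (γ : Γ) (H : Subgroup Γ) : Prop :=
  ∀ h ∈ H, ∃ n : ℕ, 0 < n ∧ γ ^ n < h

/-- An ideal of a commutative pointed monoid. -/
def IsMIdeal {A : Type*} [CommMonoidWithZero A] (I : Set A) : Prop :=
  (0 : A) ∈ I ∧ ∀ x ∈ I, ∀ a : A, x * a ∈ I

/-- The value group of a valuation: the subgroup generated by the nonzero values. -/
def valueGroup {A Γ : Type*} [CommMonoidWithZero A] [CommGroup Γ] [LinearOrder Γ] [IsOrderedMonoid Γ]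
    (v : A → WithZero Γ) : Subgroup Γ :=
  Subgroup.closure {γ : Γ | ∃ a : A, v a = (γ : WithZero Γ)}

/-- The characteristic subgroup `cΓ_v`: the smallest convex subgroup containing all
values `v x ≥ 1`. -/
def charSubgroup {A Γ : Type*} [CommMonoidWithZero A] [CommGroup Γ] [LinearOrder Γ] [IsOrderedMonoid Γ]
    (v : A → WithZero Γ) : Subgroup Γ :=
  sInf {K : Subgroup Γ | IsConvexSubgroup K ∧
    ∀ (γ : Γ) (x : A), v x = (γ : WithZero Γ) → 1 ≤ γ → γ ∈ K}

/-- An element of `Γ ∪ {0}` is cofinal for a subgroup `H` if some power of it is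
less than every element of `H`. -/
def IsCofinalFor₀ {Γ : Type*} [CommGroup Γ] [LinearOrder Γ] [IsOrderedMonoid Γ] (g : WithZero Γ)
    (H : Subgroup Γ) : Prop :=
  ∀ h ∈ H, ∃ n : ℕ, 0 < n ∧ g ^ n < ((h : Γ) : WithZero Γ)

lemma char_convex {A Γ : Type*} [CommMonoidWithZero A] [CommGroup Γ] [LinearOrder Γ] [IsOrderedMonoid Γ]
    (v : A → WithZero Γ) : IsConvexSubgroup (charSubgroup v) := by
  intro γ δ h1 h2 hγ
  rw [charSubgroup, Subgroup.mem_sInf] at hγ ⊢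
  intro K hK
  exact hK.1 γ δ h1 h2 (hγ K hK)

lemma val_mem_char {A Γ : Type*} [CommMonoidWithZero A] [CommGroup Γ] [LinearOrder Γ] [IsOrderedMonoid Γ]
    (v : A → WithZero Γ) {γ : Γ} {a : A} (hγ : v a = (γ : WithZero Γ)) (h1 : 1 ≤ γ) :
    γ ∈ charSubgroup v := by
  rw [charSubgroup, Subgroup.mem_sInf]
  intro K hK; exact hK.2 γ a hγ h1

lemma cof_coe {Γ : Type*} [CommGroup Γ] [LinearOrder Γ] [IsOrderedMonoid Γ] (δ : Γ) (H : Subgroup Γ) :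
    IsCofinalFor₀ (δ : WithZero Γ) H ↔ ∀ h ∈ H, ∃ n : ℕ, 0 < n ∧ δ ^ n < h := by
  unfold IsCofinalFor₀
  constructor <;> intro hf h hh <;> obtain ⟨n, hn, hl⟩ := hf h hh <;> refine ⟨n, hn, ?_⟩
  · exact_mod_cast (by rwa [← WithZero.coe_pow] at hl : ((δ ^ n : Γ) : WithZero Γ) < h)
  · rw [← WithZero.coe_pow]; exact_mod_cast hl

lemma cof_zero {Γ : Type*} [CommGroup Γ] [LinearOrder Γ] [IsOrderedMonoid Γ] (H : Subgroup Γ) :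
    IsCofinalFor₀ (0 : WithZero Γ) H :=
  fun h _ => ⟨1, one_pos, by simp [WithZero.zero_lt_coe]⟩

theorem cofinal_set_is_radical_ideal {A Γ : Type*} [CommMonoidWithZero A]
    [CommGroup Γ] [LinearOrder Γ] [IsOrderedMonoid Γ] (v : A → WithZero Γ)
    (hzero : v 0 = 0) (hone : v 1 = 1) (hmul : ∀ x y : A, v (x * y) = v x * v y)
    (H : Subgroup Γ) (hconv : IsConvexSubgroup H)
    (hchar : charSubgroup v < H) (hlt : H < valueGroup v) :
    IsMIdeal {x : A | IsCofinalFor₀ (v x) H} ∧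
      {x : A | ∃ n : ℕ, 0 < n ∧ x ^ n ∈ {x : A | IsCofinalFor₀ (v x) H}} =
        {x : A | IsCofinalFor₀ (v x) H} := by
  have hvpow : ∀ (a : A) (n : ℕ), v (a ^ n) = (v a) ^ n := by
    intro a n
    induction n with
    | zero => simpa using hone
    | succ n ih => rw [pow_succ, hmul, ih, pow_succ]
  -- choose g ∈ H \ charSubgroup with g < 1
  obtain ⟨h0, h0H, h0n⟩ := SetLike.exists_of_lt hchar
  obtain ⟨g, gH, gn, glt⟩ : ∃ g ∈ H, g ∉ charSubgroup v ∧ g < 1 := by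
    rcases lt_trichotomy h0 1 with h | h | h
    · exact ⟨h0, h0H, h0n, h⟩
    · exact absurd (h ▸ (charSubgroup v).one_mem) h0n
    · refine ⟨h0⁻¹, H.inv_mem h0H, fun hc => h0n ?_, ?_⟩
      · simpa using (charSubgroup v).inv_mem hc
      · exact inv_lt_one'.2 h
  -- key: powers of values ≥ 1 are bounded by g⁻¹
  have keyD : ∀ (γ : Γ) (a : A), v a = (γ : WithZero Γ) → 1 ≤ γ → ∀ n : ℕ, γ ^ n < g⁻¹ := by
    intro γ a hva hγ n
    by_contra hle
    push_neg at hle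
    have hmem : γ ^ n ∈ charSubgroup v := by
      refine val_mem_char v (a := a ^ n) ?_ (one_le_pow_of_one_le' hγ n)
      rw [hvpow, hva, WithZero.coe_pow]
    have h2 : (γ ^ n)⁻¹ ≤ g := by
      have := inv_le_inv_iff.mpr hle
      simpa using this
    exact gn (char_convex v _ g h2 glt.le ((charSubgroup v).inv_mem hmem))
  constructor
  · constructor
    · show IsCofinalFor₀ (v 0) H
      rw [hzero]; exact cof_zero H
    · intro x hx a
      show IsCofinalFor₀ (v (x * a)) H
      rw [hmul]
      rcases eq_or_ne (v a) 0 with ha | ha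
      · rw [ha, mul_zero]; exact cof_zero H
      rcases eq_or_ne (v x) 0 with hx0 | hx0
      · rw [hx0, zero_mul]; exact cof_zero H
      obtain ⟨γ, hγ⟩ := WithZero.ne_zero_iff_exists.mp ha
      obtain ⟨δ, hδ⟩ := WithZero.ne_zero_iff_exists.mp hx0
      have hx' : ∀ h ∈ H, ∃ n : ℕ, 0 < n ∧ δ ^ n < h := by
        rw [← cof_coe, hδ]; exact hx
      rw [← hδ, ← hγ, ← WithZero.coe_mul, cof_coe]
      intro h hh
      rcases le_or_gt 1 γ with h1 | h1
      · obtain ⟨n, hn, hl⟩ := hx' (h * g) (H.mul_mem hh gH)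
        refine ⟨n, hn, ?_⟩
        have h2 : γ ^ n < g⁻¹ := keyD γ a hγ.symm h1 n
        calc (δ * γ) ^ n = δ ^ n * γ ^ n := mul_pow δ γ n
          _ < (h * g) * g⁻¹ := mul_lt_mul_of_lt_of_lt hl h2
          _ = h := by group
      · obtain ⟨n, hn, hl⟩ := hx' h hh
        refine ⟨n, hn, lt_of_le_of_lt ?_ hl⟩
        calc (δ * γ) ^ n = δ ^ n * γ ^ n := mul_pow δ γ n
          _ ≤ δ ^ n := mul_le_of_le_one_right' (pow_le_one' h1.le n)
  · ext x
    simp only [Set.mem_setOf_eq]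
    constructor
    · rintro ⟨n, hn, hx⟩
      intro h hh
      obtain ⟨m, hm, hl⟩ := hx h hh
      refine ⟨n * m, Nat.mul_pos hn hm, ?_⟩
      rwa [pow_mul, ← hvpow]
    · intro hx
      exact ⟨1, one_pos, by simpa [hvpow] using hx⟩
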